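/- arXiv:1807.01635 — 3 statements merged into one kernel-verified Lean document; each statement's English description precedes it below -/
import Mathlib

section
/- Zero-covariance lemma for centered Horvitz–Thompson terms across attributes: if a ≠ a', then Cov(B_{[a]}(r), B_{[a']}(r')) = 0, where B_{[a]}(r) = (n_{[a]} π_{[a]}(r))^{-1} Σ_{i:A_i=a} 1{R_i=r} (Y_i(r) − \bar{Y}_{[a]}(r)). -/
open Finset MeasureTheory

variable {Ω : Type*} [MeasurableSpace Ω] {n H : ℕ} {𝓡 : Type*} [DecidableEq 𝓡]

/-- Number of units with attribute `a`. -/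
def nAttr (A : Fin n → Fin H) (a : Fin H) : ℕ := (univ.filter (fun i => A i = a)).card

/-- Subgroup average potential outcome `Ȳ_{[a]}(r)`. -/
noncomputable def subMean (A : Fin n → Fin H) (Y : Fin n → 𝓡 → ℝ) (a : Fin H) (r : 𝓡) : ℝ :=
  (nAttr A a : ℝ)⁻¹ * ∑ i ∈ univ.filter (fun i => A i = a), Y i r

/-- Centered Horvitz–Thompson term
`B_{[a]}(r) = (n_{[a]} π_{[a]}(r))⁻¹ Σ_{i:A_i=a} 1{R_i=r} (Y_i(r) − Ȳ_{[a]}(r))`. -/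
noncomputable def Bterm (A : Fin n → Fin H) (Y : Fin n → 𝓡 → ℝ) (R : Fin n → Ω → 𝓡)
    (π : Fin H → 𝓡 → ℝ) (a : Fin H) (r : 𝓡) (ω : Ω) : ℝ :=
  ((nAttr A a : ℝ) * π a r)⁻¹ *
    ∑ i ∈ univ.filter (fun i => A i = a),
      (if R i ω = r then Y i r - subMean A Y a r else 0)

/-- Covariance `Cov(X,Z) = E[XZ] − E[X]E[Z]`. -/
noncomputable def covar (μ : Measure Ω) (X Z : Ω → ℝ) : ℝ :=
  (∫ ω, X ω * Z ω ∂μ) - (∫ ω, X ω ∂μ) * (∫ ω, Z ω ∂μ)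

/-- Zero covariance across attributes of the centered Horvitz–Thompson terms:
under the symmetry assumption (marginal probabilities depend only on the
attribute, joint probabilities for distinct units depend only on the pair of
attributes), if `a ≠ a'` then `Cov(B_{[a]}(r), B_{[a']}(r')) = 0`. -/
theorem cov_Bterms_cross_attr_zero
    (μ : Measure Ω) [IsProbabilityMeasure μ]
    (A : Fin n → Fin H) (Y : Fin n → 𝓡 → ℝ) (R : Fin n → Ω → 𝓡)
    (hmeas : ∀ (i : Fin n) (t : 𝓡), MeasurableSet {ω | R i ω = t})
    (π : Fin H → 𝓡 → ℝ) (hπ : ∀ a t, 0 < π a t)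
    (π2 : Fin H → Fin H → 𝓡 → 𝓡 → ℝ)
    (hmarg : ∀ (i : Fin n) (t : 𝓡), (μ {ω | R i ω = t}).toReal = π (A i) t)
    (hjoint : ∀ (i j : Fin n), i ≠ j → ∀ (t t' : 𝓡),
      (μ {ω | R i ω = t ∧ R j ω = t'}).toReal = π2 (A i) (A j) t t')
    (a a' : Fin H) (haa : a ≠ a') (r r' : 𝓡) :
    covar μ (Bterm A Y R π a r) (Bterm A Y R π a' r') = 0 := by
  classical
  -- integrals / integrability of indicator-type functions
  have key : ∀ (p : Ω → Prop) [DecidablePred p], MeasurableSet {ω | p ω} → ∀ c : ℝ,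
      Integrable (fun ω => if p ω then c else 0) μ ∧
      ∫ ω, (if p ω then c else 0) ∂μ = (μ {ω | p ω}).toReal * c := by
    intro p _ hs c
    have he : (fun ω => if p ω then c else 0) = Set.indicator {ω | p ω} (fun _ => c) := by
      funext ω
      by_cases h : p ω <;> simp [Set.indicator_apply, Set.mem_setOf_eq, h]
    constructor
    · rw [he]; exact (integrable_const c).indicator hs
    · rw [he, integral_indicator_const _ hs, smul_eq_mul]; rfl
  -- centered sums vanish
  have hcent : ∀ (b : Fin H) (t : 𝓡),
      ∑ i ∈ univ.filter (fun i => A i = b), (Y i t - subMean A Y b t) = 0 := by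
    intro b t
    rw [Finset.sum_sub_distrib, Finset.sum_const, nsmul_eq_mul]
    simp only [subMean, nAttr]
    rcases eq_or_ne ((univ.filter (fun i => A i = b)).card : ℝ) 0 with h | h
    · norm_cast at h
      rw [Finset.card_eq_zero] at h
      simp [h]
    · field_simp; ring
  -- expectation of each Bterm is zero
  have hEB : ∀ (b : Fin H) (t : 𝓡), ∫ ω, Bterm A Y R π b t ω ∂μ = 0 := by
    intro b t
    have hI : ∀ i ∈ univ.filter (fun i => A i = b),
        Integrable (fun ω => if R i ω = t then Y i t - subMean A Y b t else 0) μ :=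
      fun i _ => (key (fun ω => R i ω = t) (hmeas i t) _).1
    unfold Bterm
    rw [integral_const_mul, integral_finset_sum _ hI]
    have hterm : ∀ i ∈ univ.filter (fun i => A i = b),
        ∫ ω, (if R i ω = t then Y i t - subMean A Y b t else 0) ∂μ
          = π b t * (Y i t - subMean A Y b t) := by
      intro i hi
      rw [(key (fun ω => R i ω = t) (hmeas i t) _).2, hmarg]
      simp only [Finset.mem_filter] at hi
      rw [hi.2]
    rw [Finset.sum_congr rfl hterm, ← Finset.mul_sum, hcent]
    ring
  -- expectation of the product is zero
  have hms : ∀ (i j : Fin n), MeasurableSet {ω | R i ω = r ∧ R j ω = r'} :=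
    fun i j => (hmeas i r).inter (hmeas j r')
  have hEXZ : ∫ ω, Bterm A Y R π a r ω * Bterm A Y R π a' r' ω ∂μ = 0 := by
    have hfun : (fun ω => Bterm A Y R π a r ω * Bterm A Y R π a' r' ω)
        = fun ω => (((nAttr A a : ℝ) * π a r)⁻¹ * ((nAttr A a' : ℝ) * π a' r')⁻¹) *
            ∑ i ∈ univ.filter (fun i => A i = a), ∑ j ∈ univ.filter (fun i => A i = a'),
              (if R i ω = r ∧ R j ω = r' then
                (Y i r - subMean A Y a r) * (Y j r' - subMean A Y a' r') else 0) := by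
      funext ω
      unfold Bterm
      rw [mul_mul_mul_comm, Finset.sum_mul_sum]
      congr 1
      refine Finset.sum_congr rfl fun i _ => Finset.sum_congr rfl fun j _ => ?_
      by_cases h1 : R i ω = r <;> by_cases h2 : R j ω = r' <;> simp [h1, h2]
    rw [hfun, integral_const_mul,
      integral_finset_sum _ (fun i _ => integrable_finset_sum _
        (fun j _ => (key (fun ω => R i ω = r ∧ R j ω = r') (hms i j) _).1))]
    have hterm : ∀ i ∈ univ.filter (fun i => A i = a),
        ∑ j ∈ univ.filter (fun i => A i = a'),
          ∫ ω, (if R i ω = r ∧ R j ω = r' then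
              (Y i r - subMean A Y a r) * (Y j r' - subMean A Y a' r') else 0) ∂μ = 0 := by
      intro i hi
      simp only [Finset.mem_filter] at hi
      have hinner : ∀ j ∈ univ.filter (fun i => A i = a'),
          ∫ ω, (if R i ω = r ∧ R j ω = r' then
              (Y i r - subMean A Y a r) * (Y j r' - subMean A Y a' r') else 0) ∂μ
            = π2 a a' r r' * (Y i r - subMean A Y a r) * (Y j r' - subMean A Y a' r') := by
        intro j hj
        simp only [Finset.mem_filter] at hj
        have hij : i ≠ j := by
          intro h
          exact haa (hi.2 ▸ hj.2 ▸ (congrArg A h))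
        rw [(key (fun ω => R i ω = r ∧ R j ω = r') (hms i j) _).2,
          hjoint i j hij r r', hi.2, hj.2, mul_assoc]
      rw [Finset.sum_congr rfl hinner, ← Finset.mul_sum, hcent, mul_zero]
    have hswap : ∀ i ∈ univ.filter (fun i => A i = a),
        ∫ ω, (∑ j ∈ univ.filter (fun i => A i = a'),
          if R i ω = r ∧ R j ω = r' then
            (Y i r - subMean A Y a r) * (Y j r' - subMean A Y a' r') else 0) ∂μ
        = ∑ j ∈ univ.filter (fun i => A i = a'),
            ∫ ω, (if R i ω = r ∧ R j ω = r' then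
              (Y i r - subMean A Y a r) * (Y j r' - subMean A Y a' r') else 0) ∂μ :=
      fun i _ => integral_finset_sum _
        (fun j _ => (key (fun ω => R i ω = r ∧ R j ω = r') (hms i j) _).1)
    rw [Finset.sum_congr rfl hswap, Finset.sum_congr rfl hterm]
    simp
  unfold covar
  rw [hEXZ, hEB a r]
  ring
end

section
/- Within-attribute covariance of centered Horvitz–Thompson terms: for r ≠ r', Cov(B_{[a]}(r), B_{[a]}(r')) = −(n_{[a]}−1) π_{[a][a]}(r,r') S_{[a]}(r,r') / (n_{[a]}^2 π_{[a]}(r) π_{[a]}(r')), and Var(B_{[a]}(r)) = (n_{[a]}−1)(π_{[a]}(r) − π_{[a][a]}(r,r)) S_{[a]}^2(r) / (n_{[a]}^2 π_{[a]}^2(r)). -/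
open Finset MeasureTheory

variable {Ω : Type*} [MeasurableSpace Ω] {n H : ℕ} {𝓡 : Type*} [DecidableEq 𝓡]

/-- Finite population covariance `S_{[a]}(r,r')` with divisor `n_{[a]} − 1`
(of `Y_i(r)` and `Y_i(r')` among units with attribute `a`); taking `r' = r`
gives the finite population variance `S²_{[a]}(r)`. -/
noncomputable def subCov (A : Fin n → Fin H) (Y : Fin n → 𝓡 → ℝ) (a : Fin H) (r r' : 𝓡) : ℝ :=
  ((nAttr A a : ℝ) - 1)⁻¹ *
    ∑ i ∈ univ.filter (fun i => A i = a),
      (Y i r - subMean A Y a r) * (Y i r' - subMean A Y a r')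

lemma indicator_int (μ : Measure Ω) [IsProbabilityMeasure μ] {P : Ω → Prop} [DecidablePred P]
    (hP : MeasurableSet {ω | P ω}) (c : ℝ) :
    Integrable (fun ω => if P ω then c else 0) μ ∧
    ∫ ω, (if P ω then c else 0) ∂μ = (μ {ω | P ω}).toReal * c := by
  have he : (fun ω => if P ω then c else 0) = Set.indicator {ω | P ω} (fun _ => c) := by
    funext ω
    by_cases h : P ω <;> simp [Set.indicator_apply, h]
  constructor
  · rw [he]; exact (integrable_const c).indicator hP
  · rw [he, integral_indicator_const c hP, smul_eq_mul]; rfl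

lemma sum_centered (A : Fin n → Fin H) (Y : Fin n → 𝓡 → ℝ) (a : Fin H) (r : 𝓡) :
    ∑ i ∈ univ.filter (fun i => A i = a), (Y i r - subMean A Y a r) = 0 := by
  rcases Nat.eq_zero_or_pos (nAttr A a) with h | h
  · have : univ.filter (fun i => A i = a) = ∅ := Finset.card_eq_zero.mp h
    simp [this]
  · have hm : ((nAttr A a : ℝ)) ≠ 0 := by positivity
    rw [Finset.sum_sub_distrib, Finset.sum_const, subMean]
    have hc : (univ.filter (fun i => A i = a)).card = nAttr A a := rfl
    rw [hc, nsmul_eq_mul]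
    field_simp
    ring

lemma Tsum (A : Fin n → Fin H) (Y : Fin n → 𝓡 → ℝ) (a : Fin H) (r r' : 𝓡) :
    ((nAttr A a : ℝ) - 1) * subCov A Y a r r'
      = ∑ i ∈ univ.filter (fun i => A i = a),
          (Y i r - subMean A Y a r) * (Y i r' - subMean A Y a r') := by
  rcases eq_or_ne (nAttr A a) 1 with h | h
  · obtain ⟨i0, hi0⟩ := Finset.card_eq_one.mp (h : (univ.filter (fun i => A i = a)).card = 1)
    have hmean : ∀ t, subMean A Y a t = Y i0 t := by
      intro t; simp [subMean, nAttr, hi0]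
    simp [h, hi0, hmean]
  · have hne : ((nAttr A a : ℝ) - 1) ≠ 0 :=
      sub_ne_zero.mpr (fun hc => h (by exact_mod_cast hc))
    rw [subCov, ← mul_assoc, mul_inv_cancel₀ hne, one_mul]

/-- Within-attribute covariance of centered Horvitz–Thompson terms: for `r ≠ r'`,
`Cov(B_{[a]}(r), B_{[a]}(r')) = −(n_{[a]}−1) π_{[a][a]}(r,r') S_{[a]}(r,r') /
  (n_{[a]}² π_{[a]}(r) π_{[a]}(r'))`, and
`Var(B_{[a]}(r)) = (n_{[a]}−1)(π_{[a]}(r) − π_{[a][a]}(r,r)) S²_{[a]}(r) /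
  (n_{[a]}² π_{[a]}(r)²)`. -/
theorem cov_Bterms_within_attr
    (μ : Measure Ω) [IsProbabilityMeasure μ]
    (A : Fin n → Fin H) (Y : Fin n → 𝓡 → ℝ) (R : Fin n → Ω → 𝓡)
    (hmeas : ∀ (i : Fin n) (t : 𝓡), MeasurableSet {ω | R i ω = t})
    (π : Fin H → 𝓡 → ℝ) (hπ : ∀ a t, 0 < π a t)
    (π2 : Fin H → Fin H → 𝓡 → 𝓡 → ℝ)
    (hmarg : ∀ (i : Fin n) (t : 𝓡), (μ {ω | R i ω = t}).toReal = π (A i) t)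
    (hjoint : ∀ (i j : Fin n), i ≠ j → ∀ (t t' : 𝓡),
      (μ {ω | R i ω = t ∧ R j ω = t'}).toReal = π2 (A i) (A j) t t')
    (a : Fin H) (r r' : 𝓡) :
    (r ≠ r' →
      covar μ (Bterm A Y R π a r) (Bterm A Y R π a r') =
        -(((nAttr A a : ℝ) - 1) * π2 a a r r' * subCov A Y a r r') /
          ((nAttr A a : ℝ) ^ 2 * π a r * π a r')) ∧
    covar μ (Bterm A Y R π a r) (Bterm A Y R π a r) =
      ((nAttr A a : ℝ) - 1) * (π a r - π2 a a r r) * subCov A Y a r r /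
        ((nAttr A a : ℝ) ^ 2 * (π a r) ^ 2) := by
  have hAa : ∀ i ∈ univ.filter (fun i => A i = a), A i = a :=
    fun i hi => (Finset.mem_filter.mp hi).2
  set s : Finset (Fin n) := univ.filter (fun i => A i = a) with hs
  set m : ℝ := (nAttr A a : ℝ) with hmdef
  -- expectation of each Bterm is zero
  have hE : ∀ t : 𝓡, ∫ ω, Bterm A Y R π a t ω ∂μ = 0 := by
    intro t
    have hB : (fun ω => Bterm A Y R π a t ω)
        = fun ω => (m * π a t)⁻¹ *
            ∑ i ∈ s, (if R i ω = t then Y i t - subMean A Y a t else 0) := rfl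
    rw [show (∫ ω, Bterm A Y R π a t ω ∂μ)
        = ∫ ω, (m * π a t)⁻¹ *
            ∑ i ∈ s, (if R i ω = t then Y i t - subMean A Y a t else 0) ∂μ from rfl,
      integral_const_mul, integral_finset_sum _
        (fun i _ => (indicator_int μ (hmeas i t) (Y i t - subMean A Y a t)).1)]
    have h1 : ∀ i ∈ s, ∫ ω, (if R i ω = t then Y i t - subMean A Y a t else 0) ∂μ
        = π a t * (Y i t - subMean A Y a t) := by
      intro i hi
      rw [(indicator_int μ (hmeas i t) (Y i t - subMean A Y a t)).2, hmarg, hAa i hi]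
    rw [Finset.sum_congr rfl h1, ← Finset.mul_sum, sum_centered, mul_zero, mul_zero]
  -- integral of the product
  have hP2 : ∀ t t' : 𝓡, ∫ ω, Bterm A Y R π a t ω * Bterm A Y R π a t' ω ∂μ
      = (m * π a t)⁻¹ * (m * π a t')⁻¹ *
        ∑ i ∈ s, ∑ j ∈ s, (Y i t - subMean A Y a t) * (Y j t' - subMean A Y a t') *
          (μ {ω | R i ω = t ∧ R j ω = t'}).toReal := by
    intro t t'
    have hfun : ∀ ω, Bterm A Y R π a t ω * Bterm A Y R π a t' ω
        = (m * π a t)⁻¹ * (m * π a t')⁻¹ *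
          ∑ i ∈ s, ∑ j ∈ s, (if R i ω = t ∧ R j ω = t' then
              (Y i t - subMean A Y a t) * (Y j t' - subMean A Y a t') else 0) := by
      intro ω
      have h2 : ∀ i j : Fin n,
          (if R i ω = t then Y i t - subMean A Y a t else 0) *
            (if R j ω = t' then Y j t' - subMean A Y a t' else 0)
          = (if R i ω = t ∧ R j ω = t' then
              (Y i t - subMean A Y a t) * (Y j t' - subMean A Y a t') else 0) := by
        intro i j
        by_cases h1 : R i ω = t <;> by_cases h2 : R j ω = t' <;> simp [h1, h2]
      have h3 : (∑ i ∈ s, (if R i ω = t then Y i t - subMean A Y a t else 0)) *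
            (∑ j ∈ s, (if R j ω = t' then Y j t' - subMean A Y a t' else 0))
          = ∑ i ∈ s, ∑ j ∈ s, (if R i ω = t ∧ R j ω = t' then
              (Y i t - subMean A Y a t) * (Y j t' - subMean A Y a t') else 0) := by
        rw [Finset.sum_mul_sum]
        exact Finset.sum_congr rfl fun i _ => Finset.sum_congr rfl fun j _ => h2 i j
      show ((m * π a t)⁻¹ * _) * ((m * π a t')⁻¹ * _) = _
      rw [← h3]; ring
    have hms : ∀ i j : Fin n, MeasurableSet {ω | R i ω = t ∧ R j ω = t'} := by
      intro i j
      have := (hmeas i t).inter (hmeas j t')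
      simpa [Set.setOf_and] using this
    rw [show (∫ ω, Bterm A Y R π a t ω * Bterm A Y R π a t' ω ∂μ)
        = ∫ ω, (m * π a t)⁻¹ * (m * π a t')⁻¹ *
            ∑ i ∈ s, ∑ j ∈ s, (if R i ω = t ∧ R j ω = t' then
              (Y i t - subMean A Y a t) * (Y j t' - subMean A Y a t') else 0) ∂μ
        from by congr 1; funext ω; exact hfun ω]
    rw [integral_const_mul, integral_finset_sum _
      (fun i _ => integrable_finset_sum _
        (fun j _ => (indicator_int μ (hms i j)
          ((Y i t - subMean A Y a t) * (Y j t' - subMean A Y a t'))).1))]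
    congr 1
    refine Finset.sum_congr rfl fun i _ => ?_
    rw [integral_finset_sum _
      (fun j _ => (indicator_int μ (hms i j)
        ((Y i t - subMean A Y a t) * (Y j t' - subMean A Y a t'))).1)]
    refine Finset.sum_congr rfl fun j _ => ?_
    rw [(indicator_int μ (hms i j) _).2, mul_comm]
  -- splitting the double sum
  have hsplit : ∀ (t t' : 𝓡) (d : ℝ),
      (∀ i ∈ s, (μ {ω | R i ω = t ∧ R i ω = t'}).toReal = d) →
      ∑ i ∈ s, ∑ j ∈ s, (Y i t - subMean A Y a t) * (Y j t' - subMean A Y a t') *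
          (μ {ω | R i ω = t ∧ R j ω = t'}).toReal
        = (d - π2 a a t t') * (((nAttr A a : ℝ) - 1) * subCov A Y a t t') := by
    intro t t' d hd
    have hinner : ∀ i ∈ s,
        ∑ j ∈ s, (Y i t - subMean A Y a t) * (Y j t' - subMean A Y a t') *
            (μ {ω | R i ω = t ∧ R j ω = t'}).toReal
          = (d - π2 a a t t') *
              ((Y i t - subMean A Y a t) * (Y i t' - subMean A Y a t')) := by
      intro i hi
      rw [← Finset.add_sum_erase _ _ hi, hd i hi]
      have h2 : ∀ j ∈ s.erase i,
          (Y i t - subMean A Y a t) * (Y j t' - subMean A Y a t') *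
              (μ {ω | R i ω = t ∧ R j ω = t'}).toReal
            = π2 a a t t' * ((Y i t - subMean A Y a t) * (Y j t' - subMean A Y a t')) := by
        intro j hj
        have hji : j ≠ i := Finset.ne_of_mem_erase hj
        have hjs : j ∈ s := Finset.mem_of_mem_erase hj
        rw [show (μ {ω | R i ω = t ∧ R j ω = t'}).toReal = π2 a a t t' from by
          rw [hjoint i j (Ne.symm hji) t t', hAa i hi, hAa j hjs]]
        ring
      rw [Finset.sum_congr rfl h2, ← Finset.mul_sum, ← Finset.mul_sum,
        Finset.sum_erase_eq_sub hi, sum_centered, zero_sub]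
      ring
    rw [Finset.sum_congr rfl hinner, ← Finset.mul_sum, ← Tsum]
  -- covariance formula
  have hcov : ∀ (t t' : 𝓡) (d : ℝ),
      (∀ i ∈ s, (μ {ω | R i ω = t ∧ R i ω = t'}).toReal = d) →
      covar μ (Bterm A Y R π a t) (Bterm A Y R π a t')
        = (m * π a t)⁻¹ * (m * π a t')⁻¹ *
            ((d - π2 a a t t') * ((m - 1) * subCov A Y a t t')) := by
    intro t t' d hd
    rw [covar, hE, zero_mul, sub_zero, hP2, hsplit t t' d hd]
  constructor
  · intro hne
    have hd : ∀ i ∈ s, (μ {ω | R i ω = r ∧ R i ω = r'}).toReal = 0 := by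
      intro i _
      have hempty : {ω | R i ω = r ∧ R i ω = r'} = (∅ : Set Ω) := by
        ext ω
        simp only [Set.mem_setOf_eq, Set.mem_empty_iff_false, iff_false, not_and]
        intro h1 h2
        exact hne (h1 ▸ h2)
      simp [hempty]
    rw [hcov r r' 0 hd]
    rcases eq_or_ne m 0 with h0 | h0
    · simp [h0]
    · have hπr := (hπ a r).ne'
      have hπr' := (hπ a r').ne'
      field_simp
      ring
  · have hd : ∀ i ∈ s, (μ {ω | R i ω = r ∧ R i ω = r}).toReal = π a r := by
      intro i hi
      have : {ω | R i ω = r ∧ R i ω = r} = {ω | R i ω = r} := by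
        ext ω; simp [and_self]
      rw [this, hmarg, hAa i hi]
    rw [hcov r r (π a r) hd]
    rcases eq_or_ne m 0 with h0 | h0
    · simp [h0]
    · have hπr := (hπ a r).ne'
      field_simp
end

section
/- Orthogonality of centered and mean parts: for all attributes a, a' and treatments r, r', Cov(B_{[a]}(r), C_{[a']}(r')) = 0, where C_{[a']}(r') = (n_{[a']} π_{[a']}(r'))^{-1} Σ_{j:A_j=a'} 1{R_j=r'} \bar{Y}_{[a']}(r'). -/
open Finset MeasureTheory

variable {Ω : Type*} [MeasurableSpace Ω] {n H : ℕ} {𝓡 : Type*} [DecidableEq 𝓡]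

/-- Mean part `C_{[a']}(r') = (n_{[a']} π_{[a']}(r'))⁻¹ Σ_{j:A_j=a'} 1{R_j=r'} Ȳ_{[a']}(r')`. -/
noncomputable def Cterm (A : Fin n → Fin H) (Y : Fin n → 𝓡 → ℝ) (R : Fin n → Ω → 𝓡)
    (π : Fin H → 𝓡 → ℝ) (a : Fin H) (r : 𝓡) (ω : Ω) : ℝ :=
  ((nAttr A a : ℝ) * π a r)⁻¹ *
    ∑ i ∈ univ.filter (fun i => A i = a),
      (if R i ω = r then subMean A Y a r else 0)

lemma integrable_ite_const {μ : Measure Ω} [IsProbabilityMeasure μ]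
    (p : Ω → Prop) [DecidablePred p] (hp : MeasurableSet {ω | p ω}) (c : ℝ) :
    Integrable (fun ω => if p ω then c else 0) μ := by
  have h : (fun ω => if p ω then c else 0) = Set.indicator {ω | p ω} (fun _ => c) := by
    funext ω; simp [Set.indicator_apply, Set.mem_setOf_eq]
  rw [h]
  exact (integrable_const c).indicator hp

lemma integral_ite_const {μ : Measure Ω} [IsProbabilityMeasure μ]
    (p : Ω → Prop) [DecidablePred p] (hp : MeasurableSet {ω | p ω}) (c : ℝ) :
    ∫ ω, (if p ω then c else 0) ∂μ = c * (μ {ω | p ω}).toReal := by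
  have h : (fun ω => if p ω then c else 0) = Set.indicator {ω | p ω} (fun _ => c) := by
    funext ω; simp [Set.indicator_apply, Set.mem_setOf_eq]
  rw [h, MeasureTheory.integral_indicator_const c hp]
  simp [mul_comm, measureReal_def]

/-- Orthogonality of the centered and mean parts: for all attributes `a, a'`
and treatments `r, r'`, `Cov(B_{[a]}(r), C_{[a']}(r')) = 0` under the
exchangeable treatment assignment assumption. -/
theorem cov_Bterm_Cterm_zero
    (μ : Measure Ω) [IsProbabilityMeasure μ]
    (A : Fin n → Fin H) (Y : Fin n → 𝓡 → ℝ) (R : Fin n → Ω → 𝓡)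
    (hmeas : ∀ (i : Fin n) (t : 𝓡), MeasurableSet {ω | R i ω = t})
    (π : Fin H → 𝓡 → ℝ) (hπ : ∀ a t, 0 < π a t)
    (π2 : Fin H → Fin H → 𝓡 → 𝓡 → ℝ)
    (hmarg : ∀ (i : Fin n) (t : 𝓡), (μ {ω | R i ω = t}).toReal = π (A i) t)
    (hjoint : ∀ (i j : Fin n), i ≠ j → ∀ (t t' : 𝓡),
      (μ {ω | R i ω = t ∧ R j ω = t'}).toReal = π2 (A i) (A j) t t')
    (a a' : Fin H) (r r' : 𝓡) :
    covar μ (Bterm A Y R π a r) (Cterm A Y R π a' r') = 0 := by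
  classical
  set S : Finset (Fin n) := univ.filter (fun i => A i = a) with hSdef
  set S' : Finset (Fin n) := univ.filter (fun i => A i = a') with hS'def
  set y : Fin n → ℝ := fun i => Y i r - subMean A Y a r with hydef
  set z : ℝ := subMean A Y a' r' with hzdef
  have hsum0 : ∑ i ∈ S, y i = 0 := sum_centered A Y a r
  have hmeas2 : ∀ i j : Fin n, MeasurableSet {ω | R i ω = r ∧ R j ω = r'} :=
    fun i j => (hmeas i r).inter (hmeas j r')
  -- E[B] = 0
  have hEB : (∫ ω, Bterm A Y R π a r ω ∂μ) = 0 := by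
    unfold Bterm
    rw [integral_const_mul,
      integral_finset_sum _ (fun i _ => integrable_ite_const (fun ω => R i ω = r) (hmeas i r) _)]
    have h1 : ∀ i ∈ S, (∫ ω, (if R i ω = r then y i else 0) ∂μ) = y i * π a r := by
      intro i hi
      rw [integral_ite_const (fun ω => R i ω = r) (hmeas i r), hmarg,
        (Finset.mem_filter.mp hi).2]
    rw [Finset.sum_congr rfl h1, ← Finset.sum_mul, hsum0, zero_mul, mul_zero]
  -- pointwise product
  have hprod : ∀ ω, Bterm A Y R π a r ω * Cterm A Y R π a' r' ω =
      (((nAttr A a : ℝ) * π a r)⁻¹ * ((nAttr A a' : ℝ) * π a' r')⁻¹) *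
        ∑ i ∈ S, ∑ j ∈ S', (if R i ω = r ∧ R j ω = r' then y i * z else 0) := by
    intro ω
    unfold Bterm Cterm
    rw [mul_mul_mul_comm, Finset.sum_mul_sum]
    congr 1
    refine Finset.sum_congr rfl fun i _ => Finset.sum_congr rfl fun j _ => ?_
    by_cases h1 : R i ω = r <;> by_cases h2 : R j ω = r' <;> simp [h1, h2, hydef, hzdef]
  -- the constant inner sum
  set K : ℝ := (if a = a' then ((S'.card : ℝ) - 1) * π2 a a' r r' +
      (if r = r' then π a r else 0) else (S'.card : ℝ) * π2 a a' r r') with hKdef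
  have hkey : ∀ i ∈ S, ∑ j ∈ S', (μ {ω | R i ω = r ∧ R j ω = r'}).toReal = K := by
    intro i hi
    have hAi : A i = a := (Finset.mem_filter.mp hi).2
    by_cases hia : i ∈ S'
    · have hAia' : A i = a' := (Finset.mem_filter.mp hia).2
      have haa : a = a' := hAi ▸ hAia'
      have hmii : (μ {ω | R i ω = r ∧ R i ω = r'}).toReal = if r = r' then π a r else 0 := by
        by_cases hrr : r = r'
        · subst hrr
          rw [if_pos rfl]
          have he : {ω | R i ω = r ∧ R i ω = r} = {ω | R i ω = r} := by ext ω; simp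
          rw [he, hmarg, hAi]
        · have he : {ω | R i ω = r ∧ R i ω = r'} = (∅ : Set Ω) := by
            ext ω
            simp only [Set.mem_setOf_eq, Set.mem_empty_iff_false, iff_false, not_and]
            intro h1 h2
            exact hrr (h1 ▸ h2 ▸ rfl)
          simp [he, hrr]
      rw [← Finset.sum_erase_add _ _ hia]
      have hoff : ∀ j ∈ S'.erase i,
          (μ {ω | R i ω = r ∧ R j ω = r'}).toReal = π2 a a' r r' := by
        intro j hj
        have hji : j ≠ i := (Finset.mem_erase.mp hj).1
        have hAj : A j = a' := (Finset.mem_filter.mp (Finset.mem_erase.mp hj).2).2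
        rw [hjoint i j (Ne.symm hji) r r', hAi, hAj]
      rw [Finset.sum_congr rfl hoff, Finset.sum_const, nsmul_eq_mul,
        Finset.card_erase_of_mem hia, hmii, hKdef, if_pos haa]
      have hcard : 1 ≤ S'.card := Finset.card_pos.mpr ⟨i, hia⟩
      push_cast [Nat.cast_sub hcard]
      ring
    · have haa : a ≠ a' := by
        intro h
        exact hia (Finset.mem_filter.mpr ⟨Finset.mem_univ i, h ▸ hAi⟩)
      have hoff : ∀ j ∈ S',
          (μ {ω | R i ω = r ∧ R j ω = r'}).toReal = π2 a a' r r' := by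
        intro j hj
        have hji : j ≠ i := fun h => hia (h ▸ hj)
        have hAj : A j = a' := (Finset.mem_filter.mp hj).2
        rw [hjoint i j (Ne.symm hji) r r', hAi, hAj]
      rw [Finset.sum_congr rfl hoff, Finset.sum_const, nsmul_eq_mul, hKdef, if_neg haa]
  -- E[BC] = 0
  have hEBC : (∫ ω, Bterm A Y R π a r ω * Cterm A Y R π a' r' ω ∂μ) = 0 := by
    have := MeasureTheory.integral_congr_ae (μ := μ)
      (Filter.EventuallyEq.of_eq (funext hprod))
    rw [this, integral_const_mul,
      integral_finset_sum _ (fun i _ => integrable_finset_sum _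
        (fun j _ => integrable_ite_const (fun ω => R i ω = r ∧ R j ω = r') (hmeas2 i j) _))]
    have h2 : ∀ i ∈ S, (∫ ω, ∑ j ∈ S', (if R i ω = r ∧ R j ω = r' then y i * z else 0) ∂μ)
        = y i * (z * K) := by
      intro i hi
      rw [integral_finset_sum _ (fun j _ =>
        integrable_ite_const (fun ω => R i ω = r ∧ R j ω = r') (hmeas2 i j) _)]
      have h3 : ∀ j ∈ S', (∫ ω, (if R i ω = r ∧ R j ω = r' then y i * z else 0) ∂μ)
          = y i * z * (μ {ω | R i ω = r ∧ R j ω = r'}).toReal :=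
        fun j _ => integral_ite_const (fun ω => R i ω = r ∧ R j ω = r') (hmeas2 i j) _
      rw [Finset.sum_congr rfl h3, ← Finset.mul_sum, hkey i hi, mul_assoc]
    rw [Finset.sum_congr rfl h2, ← Finset.sum_mul, hsum0, zero_mul, mul_zero]
  unfold covar
  rw [hEBC, hEB, zero_mul, sub_zero]
end
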